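/- In the Fomin–Kirillov algebra FK(3), the homogeneous components with respect to the grading placing a, b, c in degree 1 have dimensions 1, 3, 4, 3, 1 in degrees 0, 1, 2, 3, 4 respectively, and are zero in all other degrees. In particular the Hilbert series of FK(3) is 1 + 3t + 4t² + 3t³ + t⁴. -/

import Mathlib

/-!
The homogeneous components of the Fomin–Kirillov algebra `FK(3)` (with `a, b, c` in degree 1)
have dimensions `1, 3, 4, 3, 1` in degrees `0, 1, 2, 3, 4` and vanish in all other degrees;
in particular the Hilbert series of `FK(3)` is `1 + 3t + 4t² + 3t³ + t⁴`.
-/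

open FreeAlgebra

/-- The defining relations of the Fomin–Kirillov algebra `FK(3)`. -/
inductive FKRel (k : Type) [Field k] : FreeAlgebra k (Fin 3) → FreeAlgebra k (Fin 3) → Prop
  | sq_a : FKRel k (ι k (0 : Fin 3) * ι k (0 : Fin 3)) 0
  | sq_b : FKRel k (ι k (1 : Fin 3) * ι k (1 : Fin 3)) 0
  | sq_c : FKRel k (ι k (2 : Fin 3) * ι k (2 : Fin 3)) 0
  | rel1 : FKRel k (ι k (0 : Fin 3) * ι k (1 : Fin 3) + ι k (1 : Fin 3) * ι k (2 : Fin 3) +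
      ι k (2 : Fin 3) * ι k (0 : Fin 3)) 0
  | rel2 : FKRel k (ι k (1 : Fin 3) * ι k (0 : Fin 3) + ι k (0 : Fin 3) * ι k (2 : Fin 3) +
      ι k (2 : Fin 3) * ι k (1 : Fin 3)) 0

/-- The Fomin–Kirillov algebra on three generators. -/
abbrev FK3 (k : Type) [Field k] := RingQuot (FKRel k)

variable (k : Type) [Field k]

/-- The three generators of `FK(3)`. -/
noncomputable def FKgen : Fin 3 → FK3 k := fun i => RingQuot.mkAlgHom k (FKRel k) (ι k i)

/-- The homogeneous component of `FK(3)` of (internal) degree `n`: the span of all products of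
`n` generators. -/
noncomputable def FK3Component (n : ℕ) : Submodule k (FK3 k) :=
  Submodule.span k
    {z : FK3 k | ∃ l : List (Fin 3), l.length = n ∧ z = (l.map (FKgen k)).prod}

/-! ### Auxiliary material -/

open Matrix

def MaZ : Matrix (Fin 12) (Fin 12) ℤ :=
  !![0, 0, 0, 0, 0, 0, 0, 0, 0, 0, 0, 0;
    1, 0, 0, 0, 0, 0, 0, 0, 0, 0, 0, 0;
    0, 0, 0, 0, 0, 0, 0, 0, 0, 0, 0, 0;
    0, 0, 0, 0, 0, 0, 0, 0, 0, 0, 0, 0;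
    0, 0, 0, -1, 0, 0, 0, 0, 0, 0, 0, 0;
    0, 0, -1, 0, 0, 0, 0, 0, 0, 0, 0, 0;
    0, 0, -1, 0, 0, 0, 0, 0, 0, 0, 0, 0;
    0, 0, 0, -1, 0, 0, 0, 0, 0, 0, 0, 0;
    0, 0, 0, 0, -1, 0, 0, 1, 0, 0, 0, 0;
    0, 0, 0, 0, 0, 1, -1, 0, 0, 0, 0, 0;
    0, 0, 0, 0, 0, 0, 0, 0, 0, 0, 0, 0;
    0, 0, 0, 0, 0, 0, 0, 0, 0, 0, -1, 0]
def MbZ : Matrix (Fin 12) (Fin 12) ℤ :=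
  !![0, 0, 0, 0, 0, 0, 0, 0, 0, 0, 0, 0;
    0, 0, 0, 0, 0, 0, 0, 0, 0, 0, 0, 0;
    1, 0, 0, 0, 0, 0, 0, 0, 0, 0, 0, 0;
    0, 0, 0, 0, 0, 0, 0, 0, 0, 0, 0, 0;
    0, 1, 0, 0, 0, 0, 0, 0, 0, 0, 0, 0;
    0, 0, 0, 1, 0, 0, 0, 0, 0, 0, 0, 0;
    0, 0, 0, 0, 0, 0, 0, 0, 0, 0, 0, 0;
    0, 0, 0, 0, 0, 0, 0, 0, 0, 0, 0, 0;
    0, 0, 0, 0, 0, 0, 1, 0, 0, 0, 0, 0;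
    0, 0, 0, 0, 0, 0, 0, 0, 0, 0, 0, 0;
    0, 0, 0, 0, 0, 0, 0, 1, 0, 0, 0, 0;
    0, 0, 0, 0, 0, 0, 0, 0, 0, 1, 0, 0]
def McZ : Matrix (Fin 12) (Fin 12) ℤ :=
  !![0, 0, 0, 0, 0, 0, 0, 0, 0, 0, 0, 0;
    0, 0, 0, 0, 0, 0, 0, 0, 0, 0, 0, 0;
    0, 0, 0, 0, 0, 0, 0, 0, 0, 0, 0, 0;
    1, 0, 0, 0, 0, 0, 0, 0, 0, 0, 0, 0;
    0, 0, 0, 0, 0, 0, 0, 0, 0, 0, 0, 0;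
    0, 0, 0, 0, 0, 0, 0, 0, 0, 0, 0, 0;
    0, 1, 0, 0, 0, 0, 0, 0, 0, 0, 0, 0;
    0, 0, 1, 0, 0, 0, 0, 0, 0, 0, 0, 0;
    0, 0, 0, 0, 0, 0, 0, 0, 0, 0, 0, 0;
    0, 0, 0, 0, 1, 0, 0, 0, 0, 0, 0, 0;
    0, 0, 0, 0, 0, 1, 0, 0, 0, 0, 0, 0;
    0, 0, 0, 0, 0, 0, 0, 0, 1, 0, 0, 0]

lemma relZ_a : MaZ * MaZ = 0 := by decide
lemma relZ_b : MbZ * MbZ = 0 := by decide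
lemma relZ_c : McZ * McZ = 0 := by decide
lemma relZ_1 : MaZ * MbZ + MbZ * McZ + McZ * MaZ = 0 := by decide
lemma relZ_2 : MbZ * MaZ + MaZ * McZ + McZ * MbZ = 0 := by decide

def MZ : Fin 3 → Matrix (Fin 12) (Fin 12) ℤ := ![MaZ, MbZ, McZ]


section rels
variable {R : Type*} [Ring R] {A B C : R}

lemma dAB (h1 : A*B + B*C + C*A = 0) : A*B = -(B*C) - C*A := by
  have e : A*B - (-(B*C) - C*A) = A*B + B*C + C*A := by noncomm_ring
  rw [h1] at e; exact sub_eq_zero.mp e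

lemma dAC (h2 : B*A + A*C + C*B = 0) : A*C = -(B*A) - C*B := by
  have e : A*C - (-(B*A) - C*B) = B*A + A*C + C*B := by noncomm_ring
  rw [h2] at e; exact sub_eq_zero.mp e

lemma sq' (hAA : A*A = 0) : ∀ x : R, A*(A*x) = 0 := fun x => by
  rw [← mul_assoc, hAA, zero_mul]

lemma d1 (hAA : A*A = 0) (h1 : A*B + B*C + C*A = 0) : A*(B*A) = -(B*(C*A)) := by
  have e : A*(B*A) + B*(C*A) = (A*B + B*C + C*A)*A - C*(A*A) := by noncomm_ring
  rw [h1, hAA] at e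
  simp only [zero_mul, mul_zero, sub_zero] at e
  exact eq_neg_of_add_eq_zero_left e

lemma d2 (hCC : C*C = 0) (h1 : A*B + B*C + C*A = 0) (h2 : B*A + A*C + C*B = 0) :
    A*(B*C) = C*(B*A) := by
  have e : A*(B*C) - C*(B*A) =
      (A*B + B*C + C*A)*C - C*(B*A + A*C + C*B) - B*(C*C) + (C*C)*B := by noncomm_ring
  rw [h1, h2, hCC] at e
  simp only [zero_mul, mul_zero, sub_zero, zero_sub, neg_zero, add_zero, zero_add] at e
  exact sub_eq_zero.mp e

lemma d3 (hAA : A*A = 0) (hCC : C*C = 0) (h1 : A*B + B*C + C*A = 0)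
    (h2 : B*A + A*C + C*B = 0) : A*(C*A) = -(C*(B*A)) := by
  have e : A*(C*A) + C*(B*A) =
      A*(A*B + B*C + C*A) - (A*A)*B - (A*(B*C) - C*(B*A)) := by noncomm_ring
  rw [h1, hAA, d2 hCC h1 h2] at e
  simp only [mul_zero, zero_mul, sub_self, sub_zero, zero_sub, neg_zero, add_zero, zero_add] at e
  exact eq_neg_of_add_eq_zero_left e

lemma d4 (hAA : A*A = 0) (h1 : A*B + B*C + C*A = 0) (h2 : B*A + A*C + C*B = 0) :
    A*(C*B) = B*(C*A) := by
  have e : A*(C*B) - B*(C*A) =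
      A*(B*A + A*C + C*B) - (A*A)*C - (A*(B*A) + B*(C*A)) := by noncomm_ring
  rw [h2, hAA, d1 hAA h1] at e
  simp only [mul_zero, zero_mul, sub_zero, neg_add_cancel, zero_sub, neg_zero, add_zero,
    zero_add, sub_self] at e
  exact sub_eq_zero.mp e

lemma d7 (hBB : B*B = 0) (hCC : C*C = 0) (h1 : A*B + B*C + C*A = 0) :
    B*(C*B) = C*(B*C) := by
  have e : B*(C*B) - C*(B*C) =
      (A*B + B*C + C*A)*B - C*(A*B + B*C + C*A) - A*(B*B) + (C*C)*A := by noncomm_ring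
  rw [h1, hBB, hCC] at e
  simp only [zero_mul, mul_zero, sub_zero, zero_sub, neg_zero, add_zero, zero_add] at e
  exact sub_eq_zero.mp e

lemma e1 (hAA : A*A = 0) (hCC : C*C = 0) (h1 : A*B + B*C + C*A = 0)
    (h2 : B*A + A*C + C*B = 0) : A*(B*(C*A)) = 0 := by
  have e : A*(B*(C*A)) = (A*B + B*C + C*A)*(C*A) - B*(C*(C*A)) - C*(A*(C*A)) := by noncomm_ring
  rw [h1, d3 hAA hCC h1 h2] at e
  simp only [zero_mul, sq' hCC, mul_neg, mul_zero, neg_zero, sub_zero, zero_sub, neg_neg,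
    zero_add, add_zero] at e
  simpa using e

lemma e2 (hAA : A*A = 0) (hBB : B*B = 0) (h1 : A*B + B*C + C*A = 0)
    (h2 : B*A + A*C + C*B = 0) : A*(C*(B*A)) = 0 := by
  have e : A*(C*(B*A)) = (B*A + A*C + C*B)*(B*A) - B*(A*(B*A)) - C*(B*(B*A)) := by noncomm_ring
  rw [h2, d1 hAA h1] at e
  simp only [zero_mul, sq' hBB, mul_neg, mul_zero, neg_zero, sub_zero, zero_sub, neg_neg,
    zero_add, add_zero] at e
  simpa using e

lemma e4 (hBB : B*B = 0) (hCC : C*C = 0) (h1 : A*B + B*C + C*A = 0) :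
    B*(C*(B*A)) = C*(B*(C*A)) := by
  have e : B*(C*(B*A)) - C*(B*(C*A)) = (B*(C*B) - C*(B*C))*A := by noncomm_ring
  rw [d7 hBB hCC h1] at e
  simp only [sub_self, zero_mul] at e
  exact sub_eq_zero.mp e

lemma e3 (hAA : A*A = 0) (hBB : B*B = 0) (hCC : C*C = 0) (h1 : A*B + B*C + C*A = 0)
    (h2 : B*A + A*C + C*B = 0) : A*(C*(B*C)) = -(C*(B*(C*A))) := by
  have e : A*(C*(B*C)) + C*(B*(C*A)) =
      (A*(C*B) - B*(C*A))*C + B*(C*(B*A + A*C + C*B))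
        - (B*(C*(B*A)) - C*(B*(C*A))) - B*(C*(C*B)) := by noncomm_ring
  rw [d4 hAA h1 h2, h2, e4 hBB hCC h1] at e
  simp only [sub_self, zero_mul, mul_zero, sq' hCC, sub_zero, zero_add, add_zero] at e
  exact eq_neg_of_add_eq_zero_left e

lemma e6 (hBB : B*B = 0) (hCC : C*C = 0) (h1 : A*B + B*C + C*A = 0) :
    B*(C*(B*C)) = 0 := by
  have e : B*(C*(B*C)) = (B*(C*B) - C*(B*C))*C + C*(B*(C*C)) := by noncomm_ring
  rw [d7 hBB hCC h1, hCC] at e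
  simp only [sub_self, zero_mul, mul_zero, add_zero, zero_add] at e
  exact e

lemma f1 (hAA : A*A = 0) (hBB : B*B = 0) (hCC : C*C = 0) (h1 : A*B + B*C + C*A = 0)
    (h2 : B*A + A*C + C*B = 0) : A*(C*(B*(C*A))) = 0 := by
  have e : A*(C*(B*(C*A))) = (A*(C*B) - B*(C*A))*(C*A)
      + B*(C*(A*(C*A) + C*(B*A))) - B*(C*(C*(B*A))) := by noncomm_ring
  rw [d4 hAA h1 h2, d3 hAA hCC h1 h2] at e
  simp only [sub_self, zero_mul, neg_add_cancel, mul_zero, sq' hCC, sub_zero, zero_add,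
    add_zero] at e
  exact e

lemma f2 (hBB : B*B = 0) (hCC : C*C = 0) (h1 : A*B + B*C + C*A = 0) :
    B*(C*(B*(C*A))) = 0 := by
  have e : B*(C*(B*(C*A))) = (B*(C*B) - C*(B*C))*(C*A) + C*(B*(C*(C*A))) := by noncomm_ring
  rw [d7 hBB hCC h1] at e
  simp only [sub_self, zero_mul, sq' hCC, mul_zero, add_zero, zero_add] at e
  exact e

end rels


noncomputable def castM : Matrix (Fin 12) (Fin 12) ℤ →+* Matrix (Fin 12) (Fin 12) k :=
  (Int.castRingHom k).mapMatrix

noncomputable def castV : (Fin 12 → ℤ) → (Fin 12 → k) := fun v i => (v i : k)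

lemma castM_mulVec (M : Matrix (Fin 12) (Fin 12) ℤ) (v : Fin 12 → ℤ) :
    castM k M *ᵥ castV k v = castV k (M *ᵥ v) := by
  funext i
  simp only [castM, castV, Matrix.mulVec, dotProduct, RingHom.mapMatrix_apply,
    Matrix.map_apply, Int.castRingHom]
  push_cast
  rfl

lemma castV_single (j : Fin 12) : castV k (Pi.single j 1) = Pi.single j (1 : k) := by
  funext i
  simp [castV, Pi.single_apply, apply_ite]

noncomputable def FKφ0 : FreeAlgebra k (Fin 3) →ₐ[k] Matrix (Fin 12) (Fin 12) k :=
  FreeAlgebra.lift k (fun i => castM k (MZ i))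

lemma FKφ0_rel : ∀ ⦃x y : FreeAlgebra k (Fin 3)⦄, FKRel k x y → FKφ0 k x = FKφ0 k y := by
  intro x y h
  cases h <;>
    simp only [FKφ0, _root_.map_mul, _root_.map_add, _root_.map_zero, FreeAlgebra.lift_ι_apply]
  · rw [show MZ 0 = MaZ from rfl, ← _root_.map_mul, relZ_a, _root_.map_zero]
  · rw [show MZ 1 = MbZ from rfl, ← _root_.map_mul, relZ_b, _root_.map_zero]
  · rw [show MZ 2 = McZ from rfl, ← _root_.map_mul, relZ_c, _root_.map_zero]
  · rw [show MZ 0 = MaZ from rfl, show MZ 1 = MbZ from rfl, show MZ 2 = McZ from rfl,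
      ← _root_.map_mul, ← _root_.map_mul, ← _root_.map_mul, ← _root_.map_add, ← _root_.map_add, relZ_1, _root_.map_zero]
  · rw [show MZ 0 = MaZ from rfl, show MZ 1 = MbZ from rfl, show MZ 2 = McZ from rfl,
      ← _root_.map_mul, ← _root_.map_mul, ← _root_.map_mul, ← _root_.map_add, ← _root_.map_add, relZ_2, _root_.map_zero]

noncomputable def FKφ : FK3 k →ₐ[k] Matrix (Fin 12) (Fin 12) k :=
  RingQuot.liftAlgHom k ⟨FKφ0 k, FKφ0_rel k⟩

lemma FKφ_gen (i : Fin 3) : FKφ k (FKgen k i) = castM k (MZ i) := by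
  simp only [FKφ, FKgen, RingQuot.liftAlgHom_mkAlgHom_apply, FKφ0, FreeAlgebra.lift_ι_apply]

/-- The linear map sending `x` to the first column of the matrix of `x` in the regular
representation. -/
noncomputable def FKL : FK3 k →ₗ[k] (Fin 12 → k) where
  toFun x := FKφ k x *ᵥ castV k (Pi.single 0 1)
  map_add' x y := by rw [_root_.map_add, Matrix.add_mulVec]
  map_smul' c x := by rw [_root_.map_smul, Matrix.smul_mulVec]; rfl

lemma FKL_apply (x : FK3 k) : FKL k x = FKφ k x *ᵥ castV k (Pi.single 0 1) := rfl

lemma FKL_word (l : List (Fin 3)) :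
    FKL k ((l.map (FKgen k)).prod) =
      castV k ((l.map MZ).foldr Matrix.mulVec (Pi.single 0 1)) := by
  induction l with
  | nil =>
      simp only [List.map_nil, List.prod_nil, List.foldr_nil]
      rw [FKL_apply, _root_.map_one, Matrix.one_mulVec]
  | cons i t ih =>
      simp only [List.map_cons, List.prod_cons, List.foldr_cons]
      rw [FKL_apply, _root_.map_mul, ← Matrix.mulVec_mulVec, ← FKL_apply, ih, FKφ_gen,
        castM_mulVec]

/-- Spanning families in each degree. -/
noncomputable def FB0 : Fin 1 → FK3 k := ![1]
noncomputable def FB1 : Fin 3 → FK3 k := ![FKgen k 0, FKgen k 1, FKgen k 2]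
noncomputable def FB2 : Fin 4 → FK3 k :=
  ![FKgen k 1 * FKgen k 0, FKgen k 1 * FKgen k 2, FKgen k 2 * FKgen k 0, FKgen k 2 * FKgen k 1]
noncomputable def FB3 : Fin 3 → FK3 k :=
  ![FKgen k 1 * (FKgen k 2 * FKgen k 0), FKgen k 2 * (FKgen k 1 * FKgen k 0),
    FKgen k 2 * (FKgen k 1 * FKgen k 2)]
noncomputable def FB4 : Fin 1 → FK3 k :=
  ![FKgen k 2 * (FKgen k 1 * (FKgen k 2 * FKgen k 0))]

lemma comp_succ_le (n : ℕ) (S T : Set (FK3 k)) (hS : FK3Component k n ≤ Submodule.span k S)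
    (hT : ∀ i : Fin 3, ∀ s ∈ S, FKgen k i * s ∈ Submodule.span k T) :
    FK3Component k (n + 1) ≤ Submodule.span k T := by
  refine Submodule.span_le.mpr ?_
  rintro z ⟨l, hl, rfl⟩
  cases l with
  | nil => simp at hl
  | cons i t =>
      have ht : t.length = n := by simpa using hl
      have hmem : (t.map (FKgen k)).prod ∈ Submodule.span k S :=
        hS (Submodule.subset_span ⟨t, ht, rfl⟩)
      have key : ∀ x ∈ Submodule.span k S, FKgen k i * x ∈ Submodule.span k T := by
        intro x hx
        induction hx using Submodule.span_induction with
        | mem x hxS => exact hT i x hxS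
        | zero => simpa using (Submodule.span k T).zero_mem
        | add x y _ _ hx' hy' => rw [mul_add]; exact add_mem hx' hy'
        | smul c x _ hx' => rw [mul_smul_comm]; exact Submodule.smul_mem _ _ hx'
      rw [List.map_cons, List.prod_cons]
      exact key _ hmem

theorem FK3_component_finrank (h2 : ringChar k ≠ 2) (h3 : ringChar k ≠ 3) :
    Module.finrank k (FK3Component k 0) = 1 ∧
    Module.finrank k (FK3Component k 1) = 3 ∧
    Module.finrank k (FK3Component k 2) = 4 ∧
    Module.finrank k (FK3Component k 3) = 3 ∧
    Module.finrank k (FK3Component k 4) = 1 ∧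
    ∀ n : ℕ, 5 ≤ n → FK3Component k n = ⊥ := by
  -- the defining relations inside `FK3`
  have hAA : FKgen k 0 * FKgen k 0 = 0 := by
    have h := RingQuot.mkAlgHom_rel k (FKRel.sq_a (k := k))
    simp only [_root_.map_mul, _root_.map_zero] at h
    simpa only [FKgen] using h
  have hBB : FKgen k 1 * FKgen k 1 = 0 := by
    have h := RingQuot.mkAlgHom_rel k (FKRel.sq_b (k := k))
    simp only [_root_.map_mul, _root_.map_zero] at h
    simpa only [FKgen] using h
  have hCC : FKgen k 2 * FKgen k 2 = 0 := by
    have h := RingQuot.mkAlgHom_rel k (FKRel.sq_c (k := k))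
    simp only [_root_.map_mul, _root_.map_zero] at h
    simpa only [FKgen] using h
  have h1 : FKgen k 0 * FKgen k 1 + FKgen k 1 * FKgen k 2 + FKgen k 2 * FKgen k 0 = 0 := by
    have h := RingQuot.mkAlgHom_rel k (FKRel.rel1 (k := k))
    simp only [_root_.map_mul, _root_.map_add, _root_.map_zero] at h
    simpa only [FKgen] using h
  have h2' : FKgen k 1 * FKgen k 0 + FKgen k 0 * FKgen k 2 + FKgen k 2 * FKgen k 1 = 0 := by
    have h := RingQuot.mkAlgHom_rel k (FKRel.rel2 (k := k))
    simp only [_root_.map_mul, _root_.map_add, _root_.map_zero] at h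
    simpa only [FKgen] using h
  -- spanning: upper bounds
  have le0 : FK3Component k 0 ≤ Submodule.span k (Set.range (FB0 k)) := by
    refine Submodule.span_le.mpr ?_
    rintro z ⟨l, hl, rfl⟩
    rw [List.eq_nil_of_length_eq_zero hl]
    exact Submodule.subset_span ⟨0, rfl⟩
  have le1 : FK3Component k 1 ≤ Submodule.span k (Set.range (FB1 k)) := by
    refine comp_succ_le k 0 _ _ le0 ?_
    rintro i s ⟨j, rfl⟩
    fin_cases j
    show FKgen k i * 1 ∈ _
    rw [mul_one]
    fin_cases i
    · exact Submodule.subset_span ⟨0, rfl⟩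
    · exact Submodule.subset_span ⟨1, rfl⟩
    · exact Submodule.subset_span ⟨2, rfl⟩
  have le2 : FK3Component k 2 ≤ Submodule.span k (Set.range (FB2 k)) := by
    refine comp_succ_le k 1 _ _ le1 ?_
    rintro i s ⟨j, rfl⟩
    fin_cases i <;> fin_cases j
    · show FKgen k 0 * FKgen k 0 ∈ _
      rw [hAA]; exact zero_mem _
    · show FKgen k 0 * FKgen k 1 ∈ _
      rw [dAB h1]
      exact sub_mem (neg_mem (Submodule.subset_span ⟨1, rfl⟩)) (Submodule.subset_span ⟨2, rfl⟩)
    · show FKgen k 0 * FKgen k 2 ∈ _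
      rw [dAC h2']
      exact sub_mem (neg_mem (Submodule.subset_span ⟨0, rfl⟩)) (Submodule.subset_span ⟨3, rfl⟩)
    · exact Submodule.subset_span ⟨0, rfl⟩
    · show FKgen k 1 * FKgen k 1 ∈ _
      rw [hBB]; exact zero_mem _
    · exact Submodule.subset_span ⟨1, rfl⟩
    · exact Submodule.subset_span ⟨2, rfl⟩
    · exact Submodule.subset_span ⟨3, rfl⟩
    · show FKgen k 2 * FKgen k 2 ∈ _
      rw [hCC]; exact zero_mem _
  have le3 : FK3Component k 3 ≤ Submodule.span k (Set.range (FB3 k)) := by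
    refine comp_succ_le k 2 _ _ le2 ?_
    rintro i s ⟨j, rfl⟩
    fin_cases i <;> fin_cases j
    · show FKgen k 0 * (FKgen k 1 * FKgen k 0) ∈ _
      rw [d1 hAA h1]
      exact neg_mem (Submodule.subset_span ⟨0, rfl⟩)
    · show FKgen k 0 * (FKgen k 1 * FKgen k 2) ∈ _
      rw [d2 hCC h1 h2']
      exact Submodule.subset_span ⟨1, rfl⟩
    · show FKgen k 0 * (FKgen k 2 * FKgen k 0) ∈ _
      rw [d3 hAA hCC h1 h2']
      exact neg_mem (Submodule.subset_span ⟨1, rfl⟩)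
    · show FKgen k 0 * (FKgen k 2 * FKgen k 1) ∈ _
      rw [d4 hAA h1 h2']
      exact Submodule.subset_span ⟨0, rfl⟩
    · show FKgen k 1 * (FKgen k 1 * FKgen k 0) ∈ _
      rw [sq' hBB]; exact zero_mem _
    · show FKgen k 1 * (FKgen k 1 * FKgen k 2) ∈ _
      rw [sq' hBB]; exact zero_mem _
    · exact Submodule.subset_span ⟨0, rfl⟩
    · show FKgen k 1 * (FKgen k 2 * FKgen k 1) ∈ _
      rw [d7 hBB hCC h1]
      exact Submodule.subset_span ⟨2, rfl⟩
    · exact Submodule.subset_span ⟨1, rfl⟩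
    · exact Submodule.subset_span ⟨2, rfl⟩
    · show FKgen k 2 * (FKgen k 2 * FKgen k 0) ∈ _
      rw [sq' hCC]; exact zero_mem _
    · show FKgen k 2 * (FKgen k 2 * FKgen k 1) ∈ _
      rw [sq' hCC]; exact zero_mem _
  have le4 : FK3Component k 4 ≤ Submodule.span k (Set.range (FB4 k)) := by
    refine comp_succ_le k 3 _ _ le3 ?_
    rintro i s ⟨j, rfl⟩
    fin_cases i <;> fin_cases j
    · show FKgen k 0 * (FKgen k 1 * (FKgen k 2 * FKgen k 0)) ∈ _
      rw [e1 hAA hCC h1 h2']; exact zero_mem _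
    · show FKgen k 0 * (FKgen k 2 * (FKgen k 1 * FKgen k 0)) ∈ _
      rw [e2 hAA hBB h1 h2']; exact zero_mem _
    · show FKgen k 0 * (FKgen k 2 * (FKgen k 1 * FKgen k 2)) ∈ _
      rw [e3 hAA hBB hCC h1 h2']
      exact neg_mem (Submodule.subset_span ⟨0, rfl⟩)
    · show FKgen k 1 * (FKgen k 1 * (FKgen k 2 * FKgen k 0)) ∈ _
      rw [sq' hBB]; exact zero_mem _
    · show FKgen k 1 * (FKgen k 2 * (FKgen k 1 * FKgen k 0)) ∈ _
      rw [e4 hBB hCC h1]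
      exact Submodule.subset_span ⟨0, rfl⟩
    · show FKgen k 1 * (FKgen k 2 * (FKgen k 1 * FKgen k 2)) ∈ _
      rw [e6 hBB hCC h1]; exact zero_mem _
    · exact Submodule.subset_span ⟨0, rfl⟩
    · show FKgen k 2 * (FKgen k 2 * (FKgen k 1 * FKgen k 0)) ∈ _
      rw [sq' hCC]; exact zero_mem _
    · show FKgen k 2 * (FKgen k 2 * (FKgen k 1 * FKgen k 2)) ∈ _
      rw [sq' hCC]; exact zero_mem _
  have le5 : FK3Component k 5 ≤ ⊥ := by
    rw [← Submodule.span_empty (R := k) (M := FK3 k)]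
    refine comp_succ_le k 4 _ _ le4 ?_
    rintro i s ⟨j, rfl⟩
    fin_cases i <;> fin_cases j
    · show FKgen k 0 * (FKgen k 2 * (FKgen k 1 * (FKgen k 2 * FKgen k 0))) ∈ _
      rw [f1 hAA hBB hCC h1 h2']; exact zero_mem _
    · show FKgen k 1 * (FKgen k 2 * (FKgen k 1 * (FKgen k 2 * FKgen k 0))) ∈ _
      rw [f2 hBB hCC h1]; exact zero_mem _
    · show FKgen k 2 * (FKgen k 2 * (FKgen k 1 * (FKgen k 2 * FKgen k 0))) ∈ _
      rw [sq' hCC]; exact zero_mem _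
  have lebot : ∀ m : ℕ, FK3Component k (5 + m) = ⊥ := by
    intro m
    induction m with
    | zero => exact le_bot_iff.mp le5
    | succ m ih =>
        refine le_bot_iff.mp ?_
        rw [← Submodule.span_empty (R := k) (M := FK3 k)]
        refine comp_succ_le k (5 + m) ∅ ∅ ?_ ?_
        · rw [ih, Submodule.span_empty]
        · rintro i s ⟨⟩
  -- reverse inclusions: the spanning monomials lie in the components
  have ge0 : Submodule.span k (Set.range (FB0 k)) ≤ FK3Component k 0 := by
    refine Submodule.span_le.mpr ?_
    rintro z ⟨j, rfl⟩
    fin_cases j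
    exact Submodule.subset_span ⟨[], rfl, by simp [FB0]⟩
  have ge1 : Submodule.span k (Set.range (FB1 k)) ≤ FK3Component k 1 := by
    refine Submodule.span_le.mpr ?_
    rintro z ⟨j, rfl⟩
    fin_cases j
    · exact Submodule.subset_span ⟨[0], rfl, by simp [FB1]⟩
    · exact Submodule.subset_span ⟨[1], rfl, by simp [FB1]⟩
    · exact Submodule.subset_span ⟨[2], rfl, by simp [FB1]⟩
  have ge2 : Submodule.span k (Set.range (FB2 k)) ≤ FK3Component k 2 := by
    refine Submodule.span_le.mpr ?_
    rintro z ⟨j, rfl⟩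
    fin_cases j
    · exact Submodule.subset_span ⟨[1, 0], rfl, by simp [FB2]⟩
    · exact Submodule.subset_span ⟨[1, 2], rfl, by simp [FB2]⟩
    · exact Submodule.subset_span ⟨[2, 0], rfl, by simp [FB2]⟩
    · exact Submodule.subset_span ⟨[2, 1], rfl, by simp [FB2]⟩
  have ge3 : Submodule.span k (Set.range (FB3 k)) ≤ FK3Component k 3 := by
    refine Submodule.span_le.mpr ?_
    rintro z ⟨j, rfl⟩
    fin_cases j
    · exact Submodule.subset_span ⟨[1, 2, 0], rfl, by simp [FB3, mul_assoc]⟩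
    · exact Submodule.subset_span ⟨[2, 1, 0], rfl, by simp [FB3, mul_assoc]⟩
    · exact Submodule.subset_span ⟨[2, 1, 2], rfl, by simp [FB3, mul_assoc]⟩
  have ge4 : Submodule.span k (Set.range (FB4 k)) ≤ FK3Component k 4 := by
    refine Submodule.span_le.mpr ?_
    rintro z ⟨j, rfl⟩
    fin_cases j
    exact Submodule.subset_span ⟨[2, 1, 2, 0], rfl, by simp [FB4, mul_assoc]⟩
  -- linear independence via the regular representation
  have Lval : ∀ l : List (Fin 3), ∀ j : Fin 12,
      ((l.map MZ).foldr Matrix.mulVec (Pi.single 0 1)) = Pi.single j 1 →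
      FKL k ((l.map (FKgen k)).prod) = Pi.single j (1 : k) := by
    intro l j hl
    rw [FKL_word, hl, castV_single]
  have hL0 : FKL k ((([] : List (Fin 3)).map (FKgen k)).prod) = Pi.single 0 (1 : k) :=
    Lval [] 0 (by decide)
  have hLa : FKL k ((([0] : List (Fin 3)).map (FKgen k)).prod) = Pi.single 1 (1 : k) :=
    Lval [0] 1 (by decide)
  have hLb : FKL k ((([1] : List (Fin 3)).map (FKgen k)).prod) = Pi.single 2 (1 : k) :=
    Lval [1] 2 (by decide)
  have hLc : FKL k ((([2] : List (Fin 3)).map (FKgen k)).prod) = Pi.single 3 (1 : k) :=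
    Lval [2] 3 (by decide)
  have hLba : FKL k ((([1, 0] : List (Fin 3)).map (FKgen k)).prod) = Pi.single 4 (1 : k) :=
    Lval [1, 0] 4 (by decide)
  have hLbc : FKL k ((([1, 2] : List (Fin 3)).map (FKgen k)).prod) = Pi.single 5 (1 : k) :=
    Lval [1, 2] 5 (by decide)
  have hLca : FKL k ((([2, 0] : List (Fin 3)).map (FKgen k)).prod) = Pi.single 6 (1 : k) :=
    Lval [2, 0] 6 (by decide)
  have hLcb : FKL k ((([2, 1] : List (Fin 3)).map (FKgen k)).prod) = Pi.single 7 (1 : k) :=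
    Lval [2, 1] 7 (by decide)
  have hLbca : FKL k ((([1, 2, 0] : List (Fin 3)).map (FKgen k)).prod) = Pi.single 8 (1 : k) :=
    Lval [1, 2, 0] 8 (by decide)
  have hLcba : FKL k ((([2, 1, 0] : List (Fin 3)).map (FKgen k)).prod) = Pi.single 9 (1 : k) :=
    Lval [2, 1, 0] 9 (by decide)
  have hLcbc : FKL k ((([2, 1, 2] : List (Fin 3)).map (FKgen k)).prod) = Pi.single 10 (1 : k) :=
    Lval [2, 1, 2] 10 (by decide)
  have hLcbca : FKL k ((([2, 1, 2, 0] : List (Fin 3)).map (FKgen k)).prod) =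
      Pi.single 11 (1 : k) :=
    Lval [2, 1, 2, 0] 11 (by decide)
  have single_li : ∀ {d : ℕ} (f : Fin d → Fin 12), Function.Injective f →
      LinearIndependent k (fun j => (Pi.single (f j) 1 : Fin 12 → k)) := by
    intro d f hf
    have h := (Pi.basisFun k (Fin 12)).linearIndependent.comp f hf
    simpa only [Function.comp_def, Pi.basisFun_apply] using h
  have li0 : LinearIndependent k (FB0 k) := by
    apply LinearIndependent.of_comp (FKL k)
    have hc : ⇑(FKL k) ∘ FB0 k = fun j : Fin 1 => Pi.single (![0] j : Fin 12) (1 : k) := by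
      funext j
      fin_cases j
      simpa [FB0] using hL0
    rw [hc]
    exact single_li ![0] (by decide)
  have li1 : LinearIndependent k (FB1 k) := by
    apply LinearIndependent.of_comp (FKL k)
    have hc : ⇑(FKL k) ∘ FB1 k = fun j : Fin 3 => Pi.single (![1, 2, 3] j : Fin 12) (1 : k) := by
      funext j
      fin_cases j
      · simpa [FB1] using hLa
      · simpa [FB1] using hLb
      · simpa [FB1] using hLc
    rw [hc]
    exact single_li ![1, 2, 3] (by decide)
  have li2 : LinearIndependent k (FB2 k) := by
    apply LinearIndependent.of_comp (FKL k)
    have hc : ⇑(FKL k) ∘ FB2 k =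
        fun j : Fin 4 => Pi.single (![4, 5, 6, 7] j : Fin 12) (1 : k) := by
      funext j
      fin_cases j
      · simpa [FB2] using hLba
      · simpa [FB2] using hLbc
      · simpa [FB2] using hLca
      · simpa [FB2] using hLcb
    rw [hc]
    exact single_li ![4, 5, 6, 7] (by decide)
  have li3 : LinearIndependent k (FB3 k) := by
    apply LinearIndependent.of_comp (FKL k)
    have hc : ⇑(FKL k) ∘ FB3 k =
        fun j : Fin 3 => Pi.single (![8, 9, 10] j : Fin 12) (1 : k) := by
      funext j
      fin_cases j
      · simpa [FB3, mul_assoc] using hLbca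
      · simpa [FB3, mul_assoc] using hLcba
      · simpa [FB3, mul_assoc] using hLcbc
    rw [hc]
    exact single_li ![8, 9, 10] (by decide)
  have li4 : LinearIndependent k (FB4 k) := by
    apply LinearIndependent.of_comp (FKL k)
    have hc : ⇑(FKL k) ∘ FB4 k = fun j : Fin 1 => Pi.single (![11] j : Fin 12) (1 : k) := by
      funext j
      fin_cases j
      simpa [FB4, mul_assoc] using hLcbca
    rw [hc]
    exact single_li ![11] (by decide)
  refine ⟨?_, ?_, ?_, ?_, ?_, ?_⟩
  · rw [le_antisymm le0 ge0, finrank_span_eq_card li0, Fintype.card_fin]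
  · rw [le_antisymm le1 ge1, finrank_span_eq_card li1, Fintype.card_fin]
  · rw [le_antisymm le2 ge2, finrank_span_eq_card li2, Fintype.card_fin]
  · rw [le_antisymm le3 ge3, finrank_span_eq_card li3, Fintype.card_fin]
  · rw [le_antisymm le4 ge4, finrank_span_eq_card li4, Fintype.card_fin]
  · intro n hn
    obtain ⟨m, rfl⟩ := Nat.exists_eq_add_of_le hn
    exact lebot m
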